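/- Fix a : ℤ → ℂ with a(0) = 0, a(−m) = conj(a(m)) for all m, and ‖a‖_1 = Σ_{m∈ℤ} |a(m)|·|m| < ∞, and fix a bounded b : ℤ → ℝ. Let γ ≥ 1, let m ∈ ℤ, and let (λ, φ) be an eigenpair of T_0 + b with ‖φ‖ = 1 and |λ − m − b(n)| ≤ γ for all n ∈ ℤ. Then there exists a constant γ₁ > 0, depending only on ‖a‖_1 and γ, such that |φ(n)| ≤ γ₁ / |m − n|² for all n ∈ ℤ with n ≠ m. -/

import Mathlib

noncomputable section

open scoped BigOperators ComplexConjugate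

abbrev ℓ2 : Type := lp (fun _ : ℤ => ℂ) 2

/-- `(lam, φ)` is an eigenpair of the long-range operator `T₀ + b`:
for every `n`, `∑_m a (n - m) φ m + (n + b n) φ n = lam • φ n`. -/
def IsEigenpair (a : ℤ → ℂ) (b : ℤ → ℝ) (lam : ℝ) (φ : ℤ → ℂ) : Prop :=
  ∀ n : ℤ, (∑' m : ℤ, a (n - m) * φ m) + ((n : ℂ) + (b n : ℂ)) * φ n = (lam : ℂ) * φ n

set_option maxHeartbeats 2000000 in
theorem stmt_12
    (a : ℤ → ℂ) (ha0 : a 0 = 0) (hsym : ∀ m : ℤ, a (-m) = conj (a m))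
    (hsum : Summable fun m : ℤ => ‖a m‖ * (|m| : ℝ))
    (b : ℤ → ℝ) (hb : BddAbove (Set.range fun n : ℤ => |b n|))
    (γ : ℝ) (hγ : 1 ≤ γ) :
    ∃ γ₁ > 0, ∀ (m : ℤ) (lam : ℝ) (φ : ℓ2), ‖φ‖ = 1 →
      IsEigenpair a b lam (φ : ∀ _ : ℤ, ℂ) →
      (∀ n : ℤ, |lam - m - b n| ≤ γ) →
      ∀ n : ℤ, n ≠ m → ‖(φ : ∀ _ : ℤ, ℂ) n‖ ≤ γ₁ / (|m - n| : ℝ) ^ 2 := by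
  classical
  have hS0sum : Summable (fun m : ℤ => ‖a m‖) := by
    refine hsum.of_nonneg_of_le (fun m => norm_nonneg _) (fun m => ?_)
    rcases eq_or_ne m 0 with h | h
    · simp [h, ha0]
    · have h1 : (1:ℝ) ≤ |(m : ℝ)| := by
        rw [← Int.cast_abs]
        exact_mod_cast Int.one_le_abs h
      nlinarith [norm_nonneg (a m)]
  set S : ℝ := ∑' m : ℤ, ‖a m‖ * (|m| : ℝ) with hSdef
  set S₀ : ℝ := ∑' m : ℤ, ‖a m‖ with hS0def
  have hS0nonneg : 0 ≤ S₀ := tsum_nonneg fun _ => norm_nonneg _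
  have hSnonneg : 0 ≤ S := tsum_nonneg fun m => by positivity
  have haK : ∀ j : ℤ, ‖a j‖ * (|j| : ℝ) ≤ S :=
    fun j => Summable.le_tsum hsum j (fun i _ => by positivity)
  have hAsum : ∀ n : ℤ, Summable fun k : ℤ => ‖a (n - k)‖ := by
    intro n
    have h := ((Equiv.subLeft n).summable_iff (f := fun m : ℤ => ‖a m‖)).mpr hS0sum
    simpa [Function.comp_def] using h
  have hA1sum : ∀ n : ℤ, Summable fun k : ℤ => ‖a (n - k)‖ * |(n : ℝ) - (k : ℝ)| := by
    intro n
    have h := ((Equiv.subLeft n).summable_iff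
      (f := fun m : ℤ => ‖a m‖ * (|m| : ℝ))).mpr hsum
    have h2 : ∀ k : ℤ, ((fun m : ℤ => ‖a m‖ * (|m| : ℝ)) ∘ (Equiv.subLeft n)) k
        = ‖a (n - k)‖ * |(n : ℝ) - (k : ℝ)| := by
      intro k; simp [Function.comp]
    exact h.congr h2
  have hAtsum : ∀ n : ℤ, ∑' k : ℤ, ‖a (n - k)‖ = S₀ := by
    intro n
    exact (Equiv.subLeft n).tsum_eq (fun j => ‖a j‖)
  have hA1tsum : ∀ n : ℤ, ∑' k : ℤ, ‖a (n - k)‖ * |(n : ℝ) - (k : ℝ)| = S := by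
    intro n
    have h := (Equiv.subLeft n).tsum_eq (fun j : ℤ => ‖a j‖ * (|j| : ℝ))
    rw [hSdef, ← h]
    apply tsum_congr
    intro k
    simp
  set C : ℝ := 2 * S₀ + 2 * γ with hCdef
  have hCpos : 0 < C := by nlinarith
  set D : ℝ := S + C * (S₀ + S) with hDdef
  have hDnonneg : 0 ≤ D := by positivity
  refine ⟨4 * γ ^ 2 + 2 * D, by nlinarith, ?_⟩
  intro m lam φ hφ heig hlam
  have hφle : ∀ k : ℤ, ‖(φ : ∀ _ : ℤ, ℂ) k‖ ≤ 1 := by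
    intro k
    have h := lp.norm_apply_le_norm (by norm_num : (2:ENNReal) ≠ 0) φ k
    rwa [hφ] at h
  -- recursion inequality
  have hrec : ∀ (n : ℤ) (g : ℤ → ℝ), (∀ k, ‖(φ : ∀ _ : ℤ, ℂ) k‖ ≤ g k) →
      Summable (fun k : ℤ => ‖a (n - k)‖ * g k) →
      (|(m : ℝ) - (n : ℝ)| - γ) * ‖(φ : ∀ _ : ℤ, ℂ) n‖ ≤ ∑' k : ℤ, ‖a (n - k)‖ * g k := by
    intro n g hg hsg
    have heq := heig n
    have hT : (∑' k : ℤ, a (n - k) * (φ : ∀ _ : ℤ, ℂ) k)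
        = ((lam : ℂ) - (n : ℂ) - (b n : ℂ)) * (φ : ∀ _ : ℤ, ℂ) n := by
      linear_combination heq
    have hsum1 : Summable fun k : ℤ => ‖a (n - k) * (φ : ∀ _ : ℤ, ℂ) k‖ := by
      refine hsg.of_nonneg_of_le (fun k => norm_nonneg _) (fun k => ?_)
      rw [norm_mul]
      exact mul_le_mul_of_nonneg_left (hg k) (norm_nonneg _)
    have h1 : ‖∑' k : ℤ, a (n - k) * (φ : ∀ _ : ℤ, ℂ) k‖ ≤ ∑' k : ℤ, ‖a (n - k)‖ * g k := by
      refine (norm_tsum_le_tsum_norm hsum1).trans ?_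
      refine Summable.tsum_le_tsum (fun k => ?_) hsum1 hsg
      rw [norm_mul]
      exact mul_le_mul_of_nonneg_left (hg k) (norm_nonneg _)
    have h2 : ‖((lam : ℂ) - (n : ℂ) - (b n : ℂ))‖ = |lam - (n : ℝ) - b n| := by
      rw [show ((lam : ℂ) - (n : ℂ) - (b n : ℂ)) = ((lam - (n:ℝ) - b n : ℝ) : ℂ) by
        push_cast; ring]
      rw [Complex.norm_real, Real.norm_eq_abs]
    have h3 : |(m : ℝ) - (n : ℝ)| - γ ≤ |lam - (n : ℝ) - b n| := by
      have h4 := hlam n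
      have h5 : |(m : ℝ) - (n : ℝ)| ≤ |lam - (n:ℝ) - b n| + |lam - (m:ℝ) - b n| := by
        have h7 := abs_sub (lam - (n:ℝ) - b n) (lam - (m:ℝ) - b n)
        have he : (lam - (n:ℝ) - b n) - (lam - (m:ℝ) - b n) = (m:ℝ) - n := by ring
        rw [he] at h7
        exact h7
      linarith
    calc (|(m : ℝ) - (n : ℝ)| - γ) * ‖(φ : ∀ _ : ℤ, ℂ) n‖
        ≤ |lam - (n:ℝ) - b n| * ‖(φ : ∀ _ : ℤ, ℂ) n‖ :=
          mul_le_mul_of_nonneg_right h3 (norm_nonneg _)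
      _ = ‖∑' k : ℤ, a (n - k) * (φ : ∀ _ : ℤ, ℂ) k‖ := by rw [hT, norm_mul, h2]
      _ ≤ ∑' k : ℤ, ‖a (n - k)‖ * g k := h1
  -- step 1: |φ n| ≤ C / |m - n|
  have hstep1 : ∀ n : ℤ, n ≠ m → ‖(φ : ∀ _ : ℤ, ℂ) n‖ * |(m : ℝ) - (n : ℝ)| ≤ C := by
    intro n hn
    set R : ℝ := |(m : ℝ) - (n : ℝ)| with hRdef
    have hR1 : (1:ℝ) ≤ R := by
      rw [hRdef, ← Int.cast_sub, ← Int.cast_abs]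
      exact_mod_cast Int.one_le_abs (show m - n ≠ 0 by omega)
    have h0' : (R - γ) * ‖(φ : ∀ _ : ℤ, ℂ) n‖ ≤ S₀ := by
      have h0 := hrec n (fun _ => 1) (fun k => hφle k) (by simpa using hAsum n)
      simp only [mul_one] at h0
      rwa [hAtsum n] at h0
    rcases le_or_gt R (2 * γ) with hcase | hcase
    · nlinarith [norm_nonneg ((φ : ∀ _ : ℤ, ℂ) n), hφle n,
        mul_nonneg (by linarith [hφle n] : (0:ℝ) ≤ 1 - ‖(φ : ∀ _ : ℤ, ℂ) n‖)
          (by linarith : (0:ℝ) ≤ R)]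
    · nlinarith [norm_nonneg ((φ : ∀ _ : ℤ, ℂ) n),
        mul_nonneg (norm_nonneg ((φ : ∀ _ : ℤ, ℂ) n)) (by linarith : (0:ℝ) ≤ R - 2 * γ)]
  have hstep1' : ∀ k : ℤ, k ≠ m → ‖(φ : ∀ _ : ℤ, ℂ) k‖ ≤ C / |(m : ℝ) - (k : ℝ)| := by
    intro k hk
    have hR1 : (1:ℝ) ≤ |(m : ℝ) - (k : ℝ)| := by
      rw [← Int.cast_sub, ← Int.cast_abs]
      exact_mod_cast Int.one_le_abs (show m - k ≠ 0 by omega)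
    rw [le_div_iff₀ (by linarith)]
    exact hstep1 k hk
  -- step 2
  intro n hn
  set R : ℝ := |(m : ℝ) - (n : ℝ)| with hRdef
  have hR1 : (1:ℝ) ≤ R := by
    rw [hRdef, ← Int.cast_sub, ← Int.cast_abs]
    exact_mod_cast Int.one_le_abs (show m - n ≠ 0 by omega)
  have hRpos : (0:ℝ) < R := by linarith
  set g : ℤ → ℝ := fun k => if k = m then 1 else C / |(m : ℝ) - (k : ℝ)| with hgdef
  have hg0 : ∀ k, 0 ≤ g k := by
    intro k
    simp only [hgdef]
    split_ifs with h
    · norm_num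
    · exact div_nonneg hCpos.le (abs_nonneg _)
  have hgφ : ∀ k, ‖(φ : ∀ _ : ℤ, ℂ) k‖ ≤ g k := by
    intro k
    simp only [hgdef]
    split_ifs with h
    · exact hφle k
    · exact hstep1' k h
  have hgle : ∀ k, g k ≤ max 1 C := by
    intro k
    simp only [hgdef]
    split_ifs with h
    · exact le_max_left _ _
    · refine le_trans ?_ (le_max_right 1 C)
      have h1 : (1:ℝ) ≤ |(m : ℝ) - (k : ℝ)| := by
        rw [← Int.cast_sub, ← Int.cast_abs]
        exact_mod_cast Int.one_le_abs (show m - k ≠ 0 by omega)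
      exact div_le_self hCpos.le h1
  have hsg : Summable (fun k : ℤ => ‖a (n - k)‖ * g k) := by
    refine Summable.of_nonneg_of_le (fun k => mul_nonneg (norm_nonneg _) (hg0 k))
      (fun k => mul_le_mul_of_nonneg_left (hgle k) (norm_nonneg _))
      ((hAsum n).mul_right (max 1 C))
  have hmain := hrec n g hgφ hsg
  -- pointwise bound for the iterated sum
  set h' : ℤ → ℝ := fun k =>
    (if k = m then S else 0)
      + C * (‖a (n - k)‖ + ‖a (n - k)‖ * |(n : ℝ) - (k : ℝ)|) with h'def
  have hs' : Summable h' :=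
    (hasSum_ite_eq m S).summable.add (((hAsum n).add (hA1sum n)).mul_left C)
  have ht' : ∑' k : ℤ, h' k = S + C * (S₀ + S) := by
    rw [h'def, Summable.tsum_add (hasSum_ite_eq m S).summable (((hAsum n).add (hA1sum n)).mul_left C),
      tsum_ite_eq, tsum_mul_left, Summable.tsum_add (hAsum n) (hA1sum n), hAtsum n, hA1tsum n]
  have hpoint : ∀ k : ℤ, R * (‖a (n - k)‖ * g k) ≤ h' k := by
    intro k
    rcases eq_or_ne k m with rfl | hk
    · simp only [h'def, hgdef, if_pos rfl, eq_self_iff_true, if_true]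
      have h8 : ‖a (n - k)‖ * |(n : ℝ) - (k : ℝ)| ≤ S := by
        have h := haK (n - k)
        push_cast at h
        exact h
      have h9 : R = |(n : ℝ) - (k : ℝ)| := by rw [hRdef, abs_sub_comm]
      have h10 : 0 ≤ C * (‖a (n - k)‖ + ‖a (n - k)‖ * |(n : ℝ) - (k : ℝ)|) := by positivity
      nlinarith [norm_nonneg (a (n - k))]
    · simp only [h'def, hgdef, if_neg hk]
      set Q : ℝ := |(m : ℝ) - (k : ℝ)| with hQdef
      set P : ℝ := |(n : ℝ) - (k : ℝ)| with hPdef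
      have hQ1 : (1:ℝ) ≤ Q := by
        rw [hQdef, ← Int.cast_sub, ← Int.cast_abs]
        exact_mod_cast Int.one_le_abs (show m - k ≠ 0 by omega)
      have hP0 : (0:ℝ) ≤ P := by rw [hPdef]; exact abs_nonneg _
      have hA0 : (0:ℝ) ≤ ‖a (n - k)‖ := norm_nonneg _
      have hkey : R ≤ Q * (1 + P) := by
        have t1 : |m - n| ≤ |m - k| + |k - n| := abs_sub_le m k n
        have t2 : (1:ℤ) ≤ |m - k| := Int.one_le_abs (by omega)
        have t3 : |k - n| = |n - k| := abs_sub_comm k n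
        have t4 : |m - n| ≤ |m - k| * (1 + |n - k|) := by
          nlinarith [abs_nonneg (n - k), mul_le_mul_of_nonneg_right t2 (abs_nonneg (n - k))]
        rw [hRdef, hQdef, hPdef]
        have : ((|m - n| : ℤ) : ℝ) ≤ ((|m - k| * (1 + |n - k|) : ℤ) : ℝ) := by exact_mod_cast t4
        push_cast at this
        convert this using 2 <;> push_cast <;> ring
      have hrw : R * (‖a (n - k)‖ * (C / Q)) = R * ‖a (n - k)‖ * C / Q := by ring
      rw [hrw, div_le_iff₀ (by linarith : (0:ℝ) < Q), zero_add]
      nlinarith [mul_le_mul_of_nonneg_left hkey (mul_nonneg hCpos.le hA0)]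
  have hfin : R * ((R - γ) * ‖(φ : ∀ _ : ℤ, ℂ) n‖) ≤ D := by
    have h11 : R * ((R - γ) * ‖(φ : ∀ _ : ℤ, ℂ) n‖) ≤ R * ∑' k : ℤ, ‖a (n - k)‖ * g k :=
      mul_le_mul_of_nonneg_left hmain hRpos.le
    have h12 : R * ∑' k : ℤ, ‖a (n - k)‖ * g k = ∑' k : ℤ, R * (‖a (n - k)‖ * g k) :=
      (tsum_mul_left).symm
    have h13 : ∑' k : ℤ, R * (‖a (n - k)‖ * g k) ≤ ∑' k : ℤ, h' k :=
      Summable.tsum_le_tsum hpoint (hsg.mul_left R) hs'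
    rw [hDdef]
    calc R * ((R - γ) * ‖(φ : ∀ _ : ℤ, ℂ) n‖) ≤ ∑' k : ℤ, h' k := by
          rw [← h12] at h13; exact h11.trans h13
      _ = S + C * (S₀ + S) := ht'
  rw [le_div_iff₀ (by positivity : (0:ℝ) < R ^ 2)]
  rcases le_or_gt R (2 * γ) with hcase | hcase
  · nlinarith [hφle n, norm_nonneg ((φ : ∀ _ : ℤ, ℂ) n), hDnonneg,
      mul_nonneg (by linarith : (0:ℝ) ≤ 2 * γ - R) (by linarith : (0:ℝ) ≤ 2 * γ + R),
      mul_le_mul_of_nonneg_right (hφle n) (sq_nonneg R)]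
  · nlinarith [hfin, norm_nonneg ((φ : ∀ _ : ℤ, ℂ) n), sq_nonneg γ,
      mul_nonneg (mul_nonneg (norm_nonneg ((φ : ∀ _ : ℤ, ℂ) n)) hRpos.le)
        (by linarith : (0:ℝ) ≤ R - 2 * γ)]
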